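/- Let the iterates x₁,…,x_N and y₀,…,y_{N−1} be produced by a general multistep scheme driven by the linear fixed-point map g, let c ∈ ℝ^N with 1ᵀc = 1 be a minimizer of ‖Rc‖₂ over all vectors whose entries sum to one, and let y^extr = (Y − βR)c for some β ≠ 0. Then ‖(I−G)(y^extr − x*)‖₂ ≤ ‖I − β(I−G)‖₂ · min{ ‖p(G)(I−G)(x₀ − x*)‖₂ : p a real polynomial with deg p ≤ N−1 and p(1) = 1 }, where ‖·‖₂ on matrices is the spectral norm. -/

import Mathlib

open Matrix Polynomial

noncomputable def vecNorm {n : ℕ} (v : Fin n → ℝ) : ℝ := Real.sqrt (∑ i, v i ^ 2)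

/-- Spectral norm of a rectangular real matrix: supremum of `‖Av‖₂` over the Euclidean
unit ball. -/
noncomputable def specNorm {m n : ℕ} (A : Matrix (Fin m) (Fin n) ℝ) : ℝ :=
  sSup ((fun v => vecNorm (A.mulVec v)) '' {v | vecNorm v ≤ 1})

lemma vecNorm_nonneg {n : ℕ} (v : Fin n → ℝ) : 0 ≤ vecNorm v := Real.sqrt_nonneg _

lemma vecNorm_zero {n : ℕ} : vecNorm (0 : Fin n → ℝ) = 0 := by
  simp [vecNorm]

lemma vecNorm_smul {n : ℕ} (a : ℝ) (v : Fin n → ℝ) : vecNorm (a • v) = |a| * vecNorm v := by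
  unfold vecNorm
  rw [← Real.sqrt_sq_eq_abs, ← Real.sqrt_mul (sq_nonneg a), Finset.mul_sum]
  congr 1; apply Finset.sum_congr rfl; intro i _; simp [mul_pow]

lemma sq_vecNorm {n : ℕ} (v : Fin n → ℝ) : vecNorm v ^ 2 = ∑ i, v i ^ 2 :=
  Real.sq_sqrt (Finset.sum_nonneg fun i _ => sq_nonneg _)

lemma vecNorm_mulVec_le_frob {m n : ℕ} (A : Matrix (Fin m) (Fin n) ℝ) (v : Fin n → ℝ)
    (hv : vecNorm v ≤ 1) :
    vecNorm (A.mulVec v) ≤ Real.sqrt (∑ i, ∑ j, A i j ^ 2) := by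
  have hvsq : ∑ j, v j ^ 2 ≤ 1 := by
    have := sq_vecNorm v
    nlinarith [vecNorm_nonneg v]
  apply Real.sqrt_le_sqrt
  have key : ∀ i, (A.mulVec v i) ^ 2 ≤ ∑ j, A i j ^ 2 := by
    intro i
    have := Finset.sum_mul_sq_le_sq_mul_sq Finset.univ (fun j => A i j) v
    have h2 : (∑ j, A i j ^ 2) * ∑ j, v j ^ 2 ≤ ∑ j, A i j ^ 2 := by
      have hnn : 0 ≤ ∑ j, A i j ^ 2 := Finset.sum_nonneg fun j _ => sq_nonneg _
      nlinarith
    calc (A.mulVec v i) ^ 2 = (∑ j, A i j * v j) ^ 2 := by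
          simp [Matrix.mulVec, dotProduct]
      _ ≤ (∑ j, A i j ^ 2) * ∑ j, v j ^ 2 := this
      _ ≤ _ := h2
  exact Finset.sum_le_sum fun i _ => key i

lemma specNorm_bddAbove {m n : ℕ} (A : Matrix (Fin m) (Fin n) ℝ) :
    BddAbove ((fun v => vecNorm (A.mulVec v)) '' {v | vecNorm v ≤ 1}) := by
  refine ⟨Real.sqrt (∑ i, ∑ j, A i j ^ 2), ?_⟩
  rintro _ ⟨v, hv, rfl⟩
  exact vecNorm_mulVec_le_frob A v hv

lemma specNorm_nonneg {m n : ℕ} (A : Matrix (Fin m) (Fin n) ℝ) : 0 ≤ specNorm A := by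
  have h0 : vecNorm (A.mulVec (0 : Fin n → ℝ)) ∈
      (fun v => vecNorm (A.mulVec v)) '' {v | vecNorm v ≤ 1} :=
    ⟨0, by simp [vecNorm_zero], rfl⟩
  exact le_trans (vecNorm_nonneg _) (le_csSup (specNorm_bddAbove A) h0)

lemma vecNorm_mulVec_le {m n : ℕ} (A : Matrix (Fin m) (Fin n) ℝ) (v : Fin n → ℝ) :
    vecNorm (A.mulVec v) ≤ specNorm A * vecNorm v := by
  rcases eq_or_ne (vecNorm v) 0 with h | h
  · have hv0 : v = 0 := by
      by_contra hv
      have : 0 < ∑ i, v i ^ 2 := by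
        obtain ⟨i, hi⟩ : ∃ i, v i ≠ 0 := Function.ne_iff.mp hv
        exact Finset.sum_pos' (fun j _ => sq_nonneg _) ⟨i, Finset.mem_univ i, by positivity⟩
      exact absurd h (by simp [vecNorm]; positivity)
    simp [hv0, Matrix.mulVec_zero, vecNorm_zero, h]
  · have hpos : 0 < vecNorm v := lt_of_le_of_ne (vecNorm_nonneg v) (Ne.symm h)
    have hu : vecNorm ((vecNorm v)⁻¹ • v) ≤ 1 := by
      rw [vecNorm_smul, abs_of_pos (by positivity)]
      rw [inv_mul_cancel₀ h]
    have hmem : vecNorm (A.mulVec ((vecNorm v)⁻¹ • v)) ∈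
        (fun v => vecNorm (A.mulVec v)) '' {v | vecNorm v ≤ 1} := ⟨_, hu, rfl⟩
    have hle := le_csSup (specNorm_bddAbove A) hmem
    rw [Matrix.mulVec_smul, vecNorm_smul, abs_of_pos (by positivity)] at hle
    calc vecNorm (A.mulVec v) = vecNorm v * ((vecNorm v)⁻¹ * vecNorm (A.mulVec v)) := by
          field_simp
      _ ≤ vecNorm v * specNorm A := by
          apply mul_le_mul_of_nonneg_left hle (le_of_lt hpos)
      _ = specNorm A * vecNorm v := mul_comm _ _


noncomputable def qpoly (α' β' : ℕ → ℕ → ℝ) : ℕ → Polynomial ℝ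
  | 0 => 1
  | (i+1) => ∑ j ∈ (Finset.Icc 1 (i+1)).attach,
      (Polynomial.C (α' (i+1) j.1) * Polynomial.X * qpoly α' β' (j.1-1)
        + Polynomial.C (β' (i+1) j.1) * qpoly α' β' (j.1-1))
decreasing_by all_goals (have := j.2; simp only [Finset.mem_Icc] at this; omega)

lemma qpoly_succ (α' β' : ℕ → ℕ → ℝ) (i : ℕ) :
    qpoly α' β' (i+1) = ∑ j ∈ Finset.Icc 1 (i+1),
      (Polynomial.C (α' (i+1) j) * Polynomial.X * qpoly α' β' (j-1)
        + Polynomial.C (β' (i+1) j) * qpoly α' β' (j-1)) := by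
  rw [qpoly]
  exact Finset.sum_attach (Finset.Icc 1 (i+1)) (fun j =>
    Polynomial.C (α' (i+1) j) * Polynomial.X * qpoly α' β' (j-1)
      + Polynomial.C (β' (i+1) j) * qpoly α' β' (j-1))

lemma qpoly_eval_one (α' β' : ℕ → ℕ → ℝ)
    (hsum : ∀ i, 1 ≤ i → ∑ j ∈ Finset.Icc 1 i, (α' i j + β' i j) = 1) :
    ∀ i, (qpoly α' β' i).eval 1 = 1 := by
  intro i
  induction i using Nat.strong_induction_on with
  | _ i ih =>
    match i with
    | 0 => simp [qpoly]
    | (m+1) =>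
      rw [qpoly_succ]
      rw [Polynomial.eval_finset_sum]
      have : ∀ j ∈ Finset.Icc 1 (m+1),
          ((Polynomial.C (α' (m+1) j) * Polynomial.X * qpoly α' β' (j-1)
            + Polynomial.C (β' (m+1) j) * qpoly α' β' (j-1))).eval 1
          = α' (m+1) j + β' (m+1) j := by
        intro j hj
        simp only [Finset.mem_Icc] at hj
        have hq := ih (j-1) (by omega)
        simp [hq]
      rw [Finset.sum_congr rfl this]
      exact hsum (m+1) (by omega)

lemma qpoly_natDegree_le (α' β' : ℕ → ℕ → ℝ) : ∀ i, (qpoly α' β' i).natDegree ≤ i := by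
  intro i
  induction i using Nat.strong_induction_on with
  | _ i ih =>
    match i with
    | 0 => simp [qpoly]
    | (m+1) =>
      rw [qpoly_succ]
      apply Polynomial.natDegree_sum_le_of_forall_le
      intro j hj
      simp only [Finset.mem_Icc] at hj
      have hq := ih (j-1) (by omega)
      apply le_trans (Polynomial.natDegree_add_le _ _)
      apply max_le
      · apply le_trans (Polynomial.natDegree_mul_le)
        have h1 : (Polynomial.C (α' (m+1) j) * Polynomial.X : Polynomial ℝ).natDegree ≤ 1 :=
          le_trans Polynomial.natDegree_mul_le (by simp)
        omega
      · apply le_trans (Polynomial.natDegree_mul_le)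
        simp only [Polynomial.natDegree_C, zero_add]
        omega

lemma qpoly_coeff_ne (α' β' : ℕ → ℕ → ℝ) (hα : ∀ i, 1 ≤ i → α' i i ≠ 0) :
    ∀ i, (qpoly α' β' i).coeff i ≠ 0 := by
  intro i
  induction i using Nat.strong_induction_on with
  | _ i ih =>
    match i with
    | 0 => simp [qpoly]
    | (m+1) =>
      rw [qpoly_succ]
      rw [Polynomial.finset_sum_coeff]
      have hsplit : ∀ j ∈ Finset.Icc 1 (m+1),
          ((Polynomial.C (α' (m+1) j) * Polynomial.X * qpoly α' β' (j-1)
            + Polynomial.C (β' (m+1) j) * qpoly α' β' (j-1))).coeff (m+1)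
          = if j = m+1 then α' (m+1) (m+1) * (qpoly α' β' m).coeff m else 0 := by
        intro j hj
        simp only [Finset.mem_Icc] at hj
        rw [Polynomial.coeff_add]
        have hdegq := qpoly_natDegree_le α' β' (j-1)
        have hb : (Polynomial.C (β' (m+1) j) * qpoly α' β' (j-1)).coeff (m+1) = 0 := by
          apply Polynomial.coeff_eq_zero_of_natDegree_lt
          apply lt_of_le_of_lt (Polynomial.natDegree_mul_le)
          simp only [Polynomial.natDegree_C, zero_add]
          omega
        rw [hb, add_zero]
        by_cases hje : j = m+1
        · subst hje
          simp only [if_pos rfl]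
          have : (Polynomial.C (α' (m+1) (m+1)) * Polynomial.X * qpoly α' β' m).coeff (m+1)
              = α' (m+1) (m+1) * (qpoly α' β' m).coeff m := by
            rw [mul_assoc, Polynomial.coeff_C_mul, Polynomial.X_mul, Polynomial.coeff_mul_X]
          simpa using this
        · rw [if_neg hje]
          apply Polynomial.coeff_eq_zero_of_natDegree_lt
          apply lt_of_le_of_lt (Polynomial.natDegree_mul_le)
          have h1 : (Polynomial.C (α' (m+1) j) * Polynomial.X : Polynomial ℝ).natDegree ≤ 1 :=
            le_trans Polynomial.natDegree_mul_le (by simp)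
          omega
      rw [Finset.sum_congr rfl hsplit, Finset.sum_ite_eq' _ (m+1),
        if_pos (Finset.mem_Icc.mpr ⟨by omega, le_refl _⟩)]
      exact mul_ne_zero (hα (m+1) (by omega)) (ih m (by omega))

lemma qpoly_span (α' β' : ℕ → ℕ → ℝ) (hα : ∀ i, 1 ≤ i → α' i i ≠ 0) :
    ∀ n, ∀ p : Polynomial ℝ, p.natDegree ≤ n →
      ∃ c : Fin (n+1) → ℝ, p = ∑ j, c j • qpoly α' β' (j : ℕ) := by
  intro n
  induction n with
  | zero =>
    intro p hp
    refine ⟨fun _ => p.coeff 0, ?_⟩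
    rw [Polynomial.eq_C_of_natDegree_le_zero hp, Fin.sum_univ_one]
    simp [qpoly, Polynomial.smul_eq_C_mul]
  | succ n ihn =>
    intro p hp
    set a := p.coeff (n+1) / (qpoly α' β' (n+1)).coeff (n+1) with ha
    have hqc := qpoly_coeff_ne α' β' hα (n+1)
    have hp' : (p - a • qpoly α' β' (n+1)).natDegree ≤ n := by
      rw [Polynomial.natDegree_le_iff_coeff_eq_zero]
      intro k hk
      rcases eq_or_lt_of_le (Nat.succ_le_of_lt hk) with h | h
      · rw [Polynomial.coeff_sub, Polynomial.coeff_smul, ← h]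
        rw [ha]
        simp only [Nat.succ_eq_add_one, smul_eq_mul]
        exact sub_eq_zero.mpr (div_mul_cancel₀ _ hqc).symm
      · rw [Polynomial.coeff_sub, Polynomial.coeff_smul]
        rw [Polynomial.coeff_eq_zero_of_natDegree_lt (lt_of_le_of_lt hp h),
          Polynomial.coeff_eq_zero_of_natDegree_lt
            (lt_of_le_of_lt (qpoly_natDegree_le α' β' (n+1)) h)]
        simp
    obtain ⟨c', hc'⟩ := ihn _ hp'
    refine ⟨Fin.snoc c' a, ?_⟩
    rw [Fin.sum_univ_castSucc]
    simp only [Fin.snoc_castSucc, Fin.snoc_last, Fin.coe_castSucc, Fin.val_last]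
    rw [← hc']
    ring

lemma sum_mulVec' {d k : ℕ} {ι : Type*} (s : Finset ι) (M : ι → Matrix (Fin d) (Fin k) ℝ)
    (v : Fin k → ℝ) : (∑ j ∈ s, M j).mulVec v = ∑ j ∈ s, (M j).mulVec v := by
  ext i
  simp only [Matrix.mulVec, dotProduct, Finset.sum_apply, Matrix.sum_apply,
    Finset.sum_mul]
  rw [Finset.sum_comm]

lemma iterates_poly (d : ℕ) (G : Matrix (Fin d) (Fin d) ℝ) (xstar : Fin d → ℝ)
    (x y : ℕ → Fin d → ℝ) (α' β' : ℕ → ℕ → ℝ)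
    (hx : ∀ i, 1 ≤ i → x i = xstar + G.mulVec (y (i - 1) - xstar))
    (hy : ∀ i, 1 ≤ i → y i = ∑ j ∈ Finset.Icc 1 i, (α' i j • x j + β' i j • y (j - 1)))
    (hsum : ∀ i, 1 ≤ i → ∑ j ∈ Finset.Icc 1 i, (α' i j + β' i j) = 1) :
    ∀ i, y i - xstar = (Polynomial.aeval G (qpoly α' β' i)).mulVec (y 0 - xstar) := by
  intro i
  induction i using Nat.strong_induction_on with
  | _ i ih =>
    match i with
    | 0 => simp [qpoly, Matrix.one_mulVec]
    | (m+1) =>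
      have hterm : ∀ j ∈ Finset.Icc 1 (m+1),
          α' (m+1) j • x j + β' (m+1) j • y (j-1)
            - (α' (m+1) j + β' (m+1) j) • xstar
          = (Polynomial.aeval G (Polynomial.C (α' (m+1) j) * Polynomial.X * qpoly α' β' (j-1)
            + Polynomial.C (β' (m+1) j) * qpoly α' β' (j-1))).mulVec (y 0 - xstar) := by
        intro j hj
        simp only [Finset.mem_Icc] at hj
        have hq := ih (j-1) (by omega)
        have hxj : x j - xstar = G.mulVec ((Polynomial.aeval G (qpoly α' β' (j-1))).mulVec
            (y 0 - xstar)) := by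
          rw [hx j (by omega), ← hq]
          abel
        have haev : Polynomial.aeval G (Polynomial.C (α' (m+1) j) * Polynomial.X
              * qpoly α' β' (j-1) + Polynomial.C (β' (m+1) j) * qpoly α' β' (j-1))
            = α' (m+1) j • (G * Polynomial.aeval G (qpoly α' β' (j-1)))
              + β' (m+1) j • Polynomial.aeval G (qpoly α' β' (j-1)) := by
          simp [map_add, _root_.map_mul, Polynomial.aeval_X, Polynomial.aeval_C,
            Algebra.algebraMap_eq_smul_one, smul_mul_assoc]
        rw [haev, Matrix.add_mulVec, Matrix.smul_mulVec, Matrix.smul_mulVec,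
          ← Matrix.mulVec_mulVec, ← hxj, ← hq]
        rw [add_smul]
        module
      rw [hy (m+1) (by omega), qpoly_succ, map_sum, sum_mulVec']
      rw [← Finset.sum_congr rfl hterm, Finset.sum_sub_distrib, ← Finset.sum_smul,
        hsum (m+1) (by omega), one_smul]

/-- for iterates of a general multistep scheme driven by the linear fixed-point map
`g(x) = G(x−x*)+x*`, if `c` sums to one and minimizes `‖Rc‖₂` over sum-one vectors and
`y^extr = (Y − βR)c`, then `‖(I−G)(y^extr−x*)‖₂` is bounded by
`‖I − β(I−G)‖₂ · min_{deg p ≤ N−1, p(1)=1} ‖p(G)(I−G)(x₀−x*)‖₂`. -/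
theorem rna_offline_bound
    (d N : ℕ) (hd : 1 ≤ d) (hN : 1 ≤ N) (κ : ℝ) (hκ0 : 0 < κ) (hκ1 : κ < 1)
    (G : Matrix (Fin d) (Fin d) ℝ)
    (hGpsd : G.PosSemidef)
    (hGub : ((1 - κ) • (1 : Matrix (Fin d) (Fin d) ℝ) - G).PosSemidef)
    (xstar : Fin d → ℝ)
    (x y : ℕ → Fin d → ℝ)
    (α' β' : ℕ → ℕ → ℝ)
    (h0 : x 0 = y 0)
    (hx : ∀ i, 1 ≤ i → x i = xstar + G.mulVec (y (i - 1) - xstar))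
    (hy : ∀ i, 1 ≤ i → y i = ∑ j ∈ Finset.Icc 1 i, (α' i j • x j + β' i j • y (j - 1)))
    (hsum : ∀ i, 1 ≤ i → ∑ j ∈ Finset.Icc 1 i, (α' i j + β' i j) = 1)
    (hα : ∀ i, 1 ≤ i → α' i i ≠ 0)
    (Y X R : Matrix (Fin d) (Fin N) ℝ)
    (hY : Y = Matrix.of fun r (j : Fin N) => y (j : ℕ) r)
    (hX : X = Matrix.of fun r (j : Fin N) => x ((j : ℕ) + 1) r)
    (hR : R = Y - X)
    (c : Fin N → ℝ) (hc1 : ∑ j, c j = 1)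
    (hcmin : ∀ c' : Fin N → ℝ, (∑ j, c' j = 1) →
      vecNorm (R.mulVec c) ≤ vecNorm (R.mulVec c'))
    (β : ℝ) (hβ : β ≠ 0)
    (yextr : Fin d → ℝ) (hyextr : yextr = (Y - β • R).mulVec c) :
    ∀ p : Polynomial ℝ, p.degree ≤ ((N - 1 : ℕ) : WithBot ℕ) → p.eval 1 = 1 →
      vecNorm (((1 : Matrix (Fin d) (Fin d) ℝ) - G).mulVec (yextr - xstar)) ≤
        specNorm ((1 : Matrix (Fin d) (Fin d) ℝ) - β • ((1 : Matrix (Fin d) (Fin d) ℝ) - G)) *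
          vecNorm ((Polynomial.aeval G p).mulVec
            (((1 : Matrix (Fin d) (Fin d) ℝ) - G).mulVec (x 0 - xstar))) := by
  intro p hdeg hp1
  obtain ⟨n, rfl⟩ : ∃ n, N = n + 1 := ⟨N - 1, by omega⟩
  have hyq := iterates_poly d G xstar x y α' β' hx hy hsum
  -- R columns
  have hRcol : ∀ w : Fin (n+1) → ℝ,
      R.mulVec w = ∑ j : Fin (n+1), w j •
        (((1 : Matrix (Fin d) (Fin d) ℝ) - G).mulVec (y (j : ℕ) - xstar)) := by
    intro w
    have hcol : ∀ j : Fin (n+1),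
        ((1 : Matrix (Fin d) (Fin d) ℝ) - G).mulVec (y (j : ℕ) - xstar)
          = y (j : ℕ) - x ((j : ℕ) + 1) := by
      intro j
      rw [Matrix.sub_mulVec, Matrix.one_mulVec, hx ((j : ℕ) + 1) (by omega)]
      simp only [Nat.add_sub_cancel]
      abel
    have hRcolj : ∀ (i : Fin d) (j : Fin (n+1)), R i j
        = (((1 : Matrix (Fin d) (Fin d) ℝ) - G).mulVec (y (j : ℕ) - xstar)) i := by
      intro i j
      rw [hcol j, hR, hY, hX]
      simp
    ext i
    show ∑ j, R i j * w j = _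
    rw [Finset.sum_apply]
    apply Finset.sum_congr rfl
    intro j _
    rw [Pi.smul_apply, smul_eq_mul, hRcolj i j, mul_comm]
  -- p in terms of qpoly
  have hpdeg : p.natDegree ≤ n := by
    apply Polynomial.natDegree_le_iff_degree_le.mpr
    simpa using hdeg
  obtain ⟨c', hc'⟩ := qpoly_span α' β' hα n p hpdeg
  have hc'1 : ∑ j, c' j = 1 := by
    have := congrArg (Polynomial.eval 1) hc'
    rw [hp1, Polynomial.eval_finset_sum] at this
    simp only [Polynomial.eval_smul, qpoly_eval_one α' β' hsum, smul_eq_mul,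
      mul_one] at this
    exact this.symm
  -- commuting
  have hcommX : ∀ q : Polynomial ℝ, G * Polynomial.aeval G q = Polynomial.aeval G q * G := by
    intro q
    calc G * Polynomial.aeval G q = Polynomial.aeval G (Polynomial.X * q) := by
          rw [_root_.map_mul, Polynomial.aeval_X]
      _ = Polynomial.aeval G (q * Polynomial.X) := by rw [mul_comm]
      _ = Polynomial.aeval G q * G := by rw [_root_.map_mul, Polynomial.aeval_X]
  -- R c' = p(G)(I-G)(x0 - xstar)
  have hRc' : R.mulVec c' = (Polynomial.aeval G p).mulVec
      (((1 : Matrix (Fin d) (Fin d) ℝ) - G).mulVec (x 0 - xstar)) := by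
    rw [hRcol c']
    have hterm : ∀ j : Fin (n+1),
        c' j • (((1 : Matrix (Fin d) (Fin d) ℝ) - G).mulVec (y (j : ℕ) - xstar))
        = (c' j • (((1 : Matrix (Fin d) (Fin d) ℝ) - G)
            * Polynomial.aeval G (qpoly α' β' (j : ℕ)))).mulVec (x 0 - xstar) := by
      intro j
      rw [hyq (j : ℕ), h0, Matrix.mulVec_mulVec, Matrix.smul_mulVec]
    rw [Finset.sum_congr rfl (fun j _ => hterm j), ← sum_mulVec']
    have hsum2 : (∑ j : Fin (n+1), c' j • (((1 : Matrix (Fin d) (Fin d) ℝ) - G)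
          * Polynomial.aeval G (qpoly α' β' (j : ℕ))))
        = ((1 : Matrix (Fin d) (Fin d) ℝ) - G) * Polynomial.aeval G p := by
      rw [hc', map_sum, Finset.mul_sum]
      apply Finset.sum_congr rfl
      intro j _
      rw [_root_.map_smul, mul_smul_comm]
    rw [hsum2]
    have hcomm2 : ((1 : Matrix (Fin d) (Fin d) ℝ) - G) * Polynomial.aeval G p
        = Polynomial.aeval G p * ((1 : Matrix (Fin d) (Fin d) ℝ) - G) := by
      rw [sub_mul, mul_sub, one_mul, mul_one, hcommX p]
    rw [hcomm2, ← Matrix.mulVec_mulVec]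
  -- (I-G)(yextr - xstar) = (I - β(I-G)) (R c)
  have hkey : ((1 : Matrix (Fin d) (Fin d) ℝ) - G).mulVec (yextr - xstar)
      = ((1 : Matrix (Fin d) (Fin d) ℝ)
          - β • ((1 : Matrix (Fin d) (Fin d) ℝ) - G)).mulVec (R.mulVec c) := by
    have hyc : Y.mulVec c - xstar = ∑ j : Fin (n+1), c j • (y (j : ℕ) - xstar) := by
      ext i
      rw [hY]
      simp only [Matrix.mulVec, dotProduct, Matrix.of_apply, Pi.sub_apply,
        Finset.sum_apply, Pi.smul_apply, smul_eq_mul]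
      have : ∑ j : Fin (n+1), c j * (y (j : ℕ) i - xstar i)
          = (∑ j : Fin (n+1), y (j : ℕ) i * c j) - (∑ j : Fin (n+1), c j) * xstar i := by
        rw [Finset.sum_mul, ← Finset.sum_sub_distrib]
        apply Finset.sum_congr rfl
        intro j _
        ring
      rw [this, hc1, one_mul]
    have hIGyc : ((1 : Matrix (Fin d) (Fin d) ℝ) - G).mulVec (Y.mulVec c - xstar)
        = R.mulVec c := by
      rw [hyc, hRcol c]
      rw [show ∀ (A : Matrix (Fin d) (Fin d) ℝ) (f : Fin (n+1) → Fin d → ℝ),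
          A.mulVec (∑ j, f j) = ∑ j, A.mulVec (f j) from fun A f => by
            rw [← Matrix.mulVecLin_apply, map_sum]; simp [Matrix.mulVecLin_apply]]
      apply Finset.sum_congr rfl
      intro j _
      rw [Matrix.mulVec_smul]
    have hye : yextr - xstar = (Y.mulVec c - xstar) - β • R.mulVec c := by
      rw [hyextr, Matrix.sub_mulVec, Matrix.smul_mulVec]
      abel
    have hrhs : ((1 : Matrix (Fin d) (Fin d) ℝ)
          - β • ((1 : Matrix (Fin d) (Fin d) ℝ) - G)).mulVec (R.mulVec c)
        = R.mulVec c
          - β • (((1 : Matrix (Fin d) (Fin d) ℝ) - G).mulVec (R.mulVec c)) := by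
      rw [Matrix.sub_mulVec, Matrix.one_mulVec, Matrix.smul_mulVec]
    rw [hye, Matrix.mulVec_sub, hIGyc, Matrix.mulVec_smul, hrhs]
  rw [hkey, ← hRc']
  calc vecNorm (((1 : Matrix (Fin d) (Fin d) ℝ)
        - β • ((1 : Matrix (Fin d) (Fin d) ℝ) - G)).mulVec (R.mulVec c))
      ≤ specNorm ((1 : Matrix (Fin d) (Fin d) ℝ)
          - β • ((1 : Matrix (Fin d) (Fin d) ℝ) - G)) * vecNorm (R.mulVec c) :=
        vecNorm_mulVec_le _ _
    _ ≤ specNorm ((1 : Matrix (Fin d) (Fin d) ℝ)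
          - β • ((1 : Matrix (Fin d) (Fin d) ℝ) - G)) * vecNorm (R.mulVec c') :=
        mul_le_mul_of_nonneg_left (hcmin c' hc'1) (specNorm_nonneg _)
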